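/- Let G be a single unicast index coding problem on N receivers with minrk_q(G) = N−1, and suppose the shortest directed cycle in G has length N_c ≥ 3. Then: (a) every valid scalar linear index code for G over F_q with codelength N−1 satisfies max_i |R_i| ≥ 2 and (1/N)·∑_{i∈[N]} |R_i| ≥ (N + N_c − 2)/N; and (b) there exists a valid scalar linear index code for G over F_q with codelength N−1 satisfying max_i |R_i| = 2 and ∑_{i∈[N]} |R_i| = N + N_c − 2. Hence the optimal overall locality at rate N−1 is 2 and the optimal average locality is (N + N_c − 2)/N. -/

import Mathlib

/-- A valid scalar linear index code for the problem with side information sets `K`: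
encoder matrix `L : F_q^{N×ℓ}`, query sets `R`; receiver `i` can decode `x i` iff there is
`u` supported on `K i` with `u + e_i ∈ span(L_k : k ∈ R i)`. -/
def ValidScalarCode {N ℓ : ℕ} (q : Type) [Field q]
    (K : Fin N → Finset (Fin N))
    (L : Matrix (Fin N) (Fin ℓ) q)
    (R : Fin N → Finset (Fin ℓ)) : Prop :=
  ∀ i : Fin N,
    ∃ u : Fin N → q,
      (∀ j, u j ≠ 0 → j ∈ K i) ∧
      u + Pi.single i 1 ∈ Submodule.span q ((fun k (j : Fin N) => L j k) '' (R i : Set (Fin ℓ)))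

/-- The minrank of the side information graph over `F_q`: the minimum rank of a matrix
fitting the graph (all diagonal entries `1`, and `A j i = 0` whenever `j ≠ i` and `j ∉ K i`). -/
noncomputable def minrk (q : Type) [Field q] {N : ℕ} (K : Fin N → Finset (Fin N)) : ℕ :=
  sInf {n : ℕ | ∃ A : Matrix (Fin N) (Fin N) q,
    (∀ i, A i i = 1) ∧ (∀ i j, j ≠ i → j ∉ K i → A j i = 0) ∧ A.rank = n}

/-- The directed graph given by `K` has a directed cycle of length `n` whose vertices lie in
`S`: an injective `c : ZMod n → Fin N` with an edge from `c t` to `c (t+1)` for every `t`. -/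
def HasCycleIn {N : ℕ} (K : Fin N → Finset (Fin N)) (S : Finset (Fin N)) (n : ℕ) : Prop :=
  ∃ c : ZMod n → Fin N, (∀ t, c t ∈ S) ∧ Function.Injective c ∧ ∀ t, c (t + 1) ∈ K (c t)

lemma exists_cycle_of_in_neighbors {N : ℕ} (K : Fin N → Finset (Fin N)) (Z : Finset (Fin N))
    (hZ : Z.Nonempty) (h : ∀ i ∈ Z, ∃ j ∈ Z, i ∈ K j) :
    ∃ p, 0 < p ∧ p ≤ Z.card ∧ HasCycleIn K Finset.univ p := by
  classical
  have hch : ∀ x : {y // y ∈ Z}, ∃ y : {y // y ∈ Z}, (x : Fin N) ∈ K (y : Fin N) := by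
    intro x
    obtain ⟨j, hjZ, hij⟩ := h x x.2
    exact ⟨⟨j, hjZ⟩, hij⟩
  choose g hg using hch
  obtain ⟨x0, hx0⟩ := hZ
  obtain ⟨a, b, hab, heq⟩ :=
    Finite.exists_ne_map_eq_of_infinite (fun n : ℕ => g^[n] ⟨x0, hx0⟩)
  have key : ∀ a b : ℕ, a < b → g^[a] ⟨x0, hx0⟩ = g^[b] ⟨x0, hx0⟩ →
      ∃ w : {y // y ∈ Z}, ∃ m, 0 < m ∧ g^[m] w = w := by
    intro a b hlt he
    refine ⟨g^[a] ⟨x0, hx0⟩, b - a, by omega, ?_⟩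
    rw [← Function.iterate_add_apply]
    rw [show b - a + a = b by omega]
    exact he.symm
  have hex : ∃ w : {y // y ∈ Z}, ∃ m, 0 < m ∧ g^[m] w = w := by
    rcases lt_or_gt_of_ne hab with h' | h'
    · exact key a b h' heq
    · exact key b a h' heq.symm
  obtain ⟨w, hw⟩ := hex
  set p := Nat.find hw with hp_def
  obtain ⟨hp_pos, hp_per⟩ : 0 < p ∧ g^[p] w = w := Nat.find_spec hw
  have hp_min : ∀ n, n < p → ¬(0 < n ∧ g^[n] w = w) := fun n hn => Nat.find_min hw hn
  haveI : NeZero p := ⟨hp_pos.ne'⟩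
  -- periodicity
  have hper : ∀ n, g^[n] w = g^[n % p] w := by
    intro n
    induction n using Nat.strong_induction_on with
    | _ n ih =>
      rcases lt_or_ge n p with h' | h'
      · rw [Nat.mod_eq_of_lt h']
      · have h1 : g^[n] w = g^[n - p] w := by
          conv_lhs => rw [show n = (n - p) + p by omega]
          rw [Function.iterate_add_apply, hp_per]
        have h2 : (n - p) % p = n % p := by
          conv_rhs => rw [show n = (n - p) + p by omega]
          rw [Nat.add_mod_right]
        rw [h1, ih _ (by omega), h2]
  -- distinctness below p
  have hdist : ∀ a b : ℕ, a < p → b < p → g^[a] w = g^[b] w → a = b := by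
    have aux : ∀ a b : ℕ, a ≤ b → b < p → g^[a] w = g^[b] w → a = b := by
      intro a b hle hb he
      by_contra hne
      have hlt : a < b := lt_of_le_of_ne hle hne
      have : g^[p - b + a] w = w := by
        rw [Function.iterate_add_apply, he, ← Function.iterate_add_apply,
          show p - b + b = p by omega, hp_per]
      exact hp_min (p - b + a) (by omega) ⟨by omega, this⟩
    intro a b ha hb he
    rcases le_total a b with h' | h'
    · exact aux a b h' hb he
    · exact (aux b a h' ha he.symm).symm
  -- the cycle
  set c' : ZMod p → {y // y ∈ Z} := fun t => g^[(-t).val] w with hc'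
  have hc'inj : Function.Injective c' := by
    intro t1 t2 he
    have := hdist _ _ (ZMod.val_lt _) (ZMod.val_lt _) he
    have h2 : ((-t1).val : ZMod p) = ((-t2).val : ZMod p) := by rw [this]
    rw [ZMod.natCast_rightInverse (-t1), ZMod.natCast_rightInverse (-t2)] at h2
    exact neg_injective h2
  have hstep : ∀ t : ZMod p, g (c' (t + 1)) = c' t := by
    intro t
    show g (g^[(-(t+1)).val] w) = g^[(-t).val] w
    rw [← Function.iterate_succ_apply' g]
    rw [hper ((-(t+1)).val + 1), hper ((-t).val)]
    congr 1
    have : (((-(t+1)).val + 1 : ℕ) : ZMod p) = (((-t).val : ℕ) : ZMod p) := by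
      push_cast
      rw [ZMod.natCast_rightInverse (-(t+1)), ZMod.natCast_rightInverse (-t)]
      ring
    exact (ZMod.natCast_eq_natCast_iff _ _ _).mp this
  refine ⟨p, hp_pos, ?_, ⟨fun t => (c' t : Fin N), fun t => Finset.mem_univ _,
    fun t1 t2 he => hc'inj (Subtype.coe_injective he), fun t => ?_⟩⟩
  · calc p = Fintype.card (ZMod p) := (ZMod.card p).symm
      _ ≤ Fintype.card {y // y ∈ Z} := Fintype.card_le_of_injective c' hc'inj
      _ = Z.card := Fintype.card_coe Z
  · have := hg (c' (t + 1))
    rwa [hstep t] at this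

open Module in
lemma part_a {N Nc : ℕ} (q : Type) [Field q]
    (K : Fin N → Finset (Fin N)) (hK : ∀ i, i ∉ K i)
    (hminrk : minrk q K = N - 1)
    (hNc : 3 ≤ Nc)
    (hshortest : ∀ n, 0 < n → n < Nc → ¬ HasCycleIn K Finset.univ n)
    (hN : 3 ≤ N)
    (L : Matrix (Fin N) (Fin (N - 1)) q) (R : Fin N → Finset (Fin (N - 1)))
    (hvalid : ValidScalarCode q K L R) :
    (∃ i, 2 ≤ (R i).card) ∧ N + Nc - 2 ≤ ∑ i, (R i).card := by
  classical
  choose u hu hspan using hvalid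
  set v : Fin N → (Fin N → q) := fun i => u i + Pi.single i 1 with hv
  have hvii : ∀ i, v i i = 1 := by
    intro i
    have hui : u i i = 0 := by
      by_contra h
      exact hK i (hu i i h)
    simp [hv, hui]
  have hvzero : ∀ i j, j ≠ i → j ∉ K i → v i j = 0 := by
    intro i j hne hnot
    have huj : u i j = 0 := by
      by_contra h
      exact hnot (hu i j h)
    simp [hv, huj, Pi.single_eq_of_ne hne]
  set B : Matrix (Fin N) (Fin N) q := fun j i => v i j with hB
  -- rank bounds
  have hrankB_ge : N - 1 ≤ B.rank := by
    have : B.rank ∈ {n : ℕ | ∃ A : Matrix (Fin N) (Fin N) q,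
        (∀ i, A i i = 1) ∧ (∀ i j, j ≠ i → j ∉ K i → A j i = 0) ∧ A.rank = n} :=
      ⟨B, hvii, hvzero, rfl⟩
    have := Nat.sInf_le this
    rwa [← minrk, hminrk] at this
  have hvmemL : ∀ i, v i ∈ LinearMap.range L.mulVecLin := by
    intro i
    rw [Matrix.range_mulVecLin]
    refine Submodule.span_mono ?_ (hspan i)
    rintro x ⟨k, hk, rfl⟩
    exact ⟨k, rfl⟩
  have hBrange : LinearMap.range B.mulVecLin ≤ LinearMap.range L.mulVecLin := by
    rw [Matrix.range_mulVecLin, Submodule.span_le]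
    rintro x ⟨i, rfl⟩
    exact hvmemL i
  have hrankB_le : B.rank ≤ L.rank := Submodule.finrank_mono hBrange
  have hrankL_le : L.rank ≤ N - 1 := Matrix.rank_le_width L
  have hrankL : L.rank = N - 1 := le_antisymm hrankL_le (le_trans hrankB_ge hrankB_le)
  have hrankB : B.rank = N - 1 := le_antisymm (le_trans hrankB_le hrankL_le) hrankB_ge
  -- columns of L are linearly independent
  have hLi : LinearIndependent q (fun k (j : Fin N) => L j k) := by
    rw [linearIndependent_iff_card_eq_finrank_span]
    have : Set.range (fun k (j : Fin N) => L j k) = Set.range L.col := rfl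
    rw [Fintype.card_fin, this]
    unfold Set.finrank
    rw [← Matrix.range_mulVecLin]
    exact hrankL.symm
  -- kernel of B
  have hkerB : finrank q (LinearMap.ker B.mulVecLin) = 1 := by
    have h1 := LinearMap.finrank_range_add_finrank_ker B.mulVecLin
    rw [Module.finrank_pi, Fintype.card_fin] at h1
    have h2 : finrank q (LinearMap.range B.mulVecLin) = N - 1 := hrankB
    omega
  obtain ⟨z', hz'⟩ : ∃ z' : LinearMap.ker B.mulVecLin, z' ≠ 0 := by
    have : Nontrivial (LinearMap.ker B.mulVecLin) := by
      apply Module.nontrivial_of_finrank_pos (R := q)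
      omega
    exact exists_ne 0
  set z : Fin N → q := (z' : Fin N → q) with hz_def
  have hzker : B.mulVecLin z = 0 := z'.2
  have hz : z ≠ 0 := fun h => hz' (Subtype.ext h)
  set Z : Finset (Fin N) := Finset.univ.filter (fun i => z i ≠ 0) with hZ_def
  have hZne : Z.Nonempty := by
    obtain ⟨i, hi⟩ := Function.ne_iff.mp hz
    refine ⟨i, ?_⟩
    rw [hZ_def, Finset.mem_filter]
    exact ⟨Finset.mem_univ i, by simpa using hi⟩
  have hmemZ : ∀ i, i ∈ Z ↔ z i ≠ 0 := by intro i; simp [hZ_def]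
  -- every element of Z has an in-neighbor in Z
  have hinn : ∀ i ∈ Z, ∃ j ∈ Z, i ∈ K j := by
    intro i hi
    by_contra h'
    push_neg at h'
    have h0 : ∑ j, B i j * z j = 0 := congrFun hzker i
    rw [Finset.sum_eq_single i] at h0
    · have h1 : B i i = 1 := hvii i
      rw [h1, one_mul] at h0
      exact (hmemZ i).mp hi h0
    · intro j _ hne
      by_cases hzj : z j = 0
      · rw [hzj, mul_zero]
      · have h1 : B i j = 0 := hvzero j i (fun h => hne h.symm) (h' j ((hmemZ j).mpr hzj))
        rw [h1, zero_mul]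
    · intro h; exact absurd (Finset.mem_univ i) h
  obtain ⟨p, hp0, hpcard, hpcyc⟩ := exists_cycle_of_in_neighbors K Z hZne hinn
  have hNc_le_p : Nc ≤ p := by
    by_contra h'
    exact hshortest p hp0 (by omega) hpcyc
  set d := Z.card with hd_def
  have hd : Nc ≤ d := le_trans hNc_le_p hpcard
  have hdN : d ≤ N := by
    have := Finset.card_le_univ Z
    rwa [Fintype.card_fin] at this
  -- extension by zero, as a linear map
  set ext : ({x // x ∈ Z} → q) →ₗ[q] (Fin N → q) :=
    { toFun := fun a j => if h : j ∈ Z then a ⟨j, h⟩ else 0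
      map_add' := by
        intro a b; funext j; by_cases h : j ∈ Z <;> simp [h]
      map_smul' := by
        intro c a; funext j; by_cases h : j ∈ Z <;> simp [h] } with hext_def
  have hext_apply : ∀ (a : {x // x ∈ Z} → q) j, ext a j = if h : j ∈ Z then a ⟨j, h⟩ else 0 :=
    fun a j => rfl
  have hext_inj : Function.Injective ext := by
    intro a b h
    funext x
    have h2 := congrFun h (x : Fin N)
    rwa [hext_apply, hext_apply, dif_pos x.2, dif_pos x.2] at h2
  set φ : ({x // x ∈ Z} → q) →ₗ[q] (Fin N → q) :=
    { toFun := fun a => ∑ x : {x // x ∈ Z}, a x • v ↑x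
      map_add' := by intro a b; simp [add_smul, Finset.sum_add_distrib]
      map_smul' := by intro c a; simp [Finset.smul_sum, mul_smul] } with hφ_def
  have hφ_apply : ∀ a, φ a = ∑ x : {x // x ∈ Z}, a x • v ↑x := fun a => rfl
  have hφB : ∀ a, B.mulVecLin (ext a) = φ a := by
    intro a
    funext i
    have h1 : B.mulVecLin (ext a) i = ∑ j, B i j * ext a j := rfl
    rw [h1, hφ_apply, Finset.sum_apply]
    rw [← Finset.sum_subset (Finset.subset_univ Z) (f := fun j => B i j * ext a j) (by
      intro j _ hj
      show B i j * ext a j = 0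
      rw [hext_apply, dif_neg hj, mul_zero])]
    rw [← Finset.sum_coe_sort Z (fun j => B i j * ext a j)]
    apply Finset.sum_congr rfl
    intro x _
    rw [hext_apply, dif_pos x.2]
    show v (↑x) i * a x = a x • v (↑x) i
    rw [smul_eq_mul, mul_comm]
  have hker_mem : ∀ a ∈ LinearMap.ker φ, ext a ∈ LinearMap.ker B.mulVecLin := by
    intro a ha
    rw [LinearMap.mem_ker] at ha ⊢
    rw [hφB a, ha]
  have hψinj : Function.Injective (ext.restrict hker_mem) := by
    intro x y h
    exact Subtype.ext (hext_inj (congrArg Subtype.val h))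
  have hkerφ : finrank q (LinearMap.ker φ) ≤ 1 := by
    have := LinearMap.finrank_le_finrank_of_injective hψinj
    rwa [hkerB] at this
  have hrangeφ : d - 1 ≤ finrank q (LinearMap.range φ) := by
    have h1 := LinearMap.finrank_range_add_finrank_ker φ
    rw [Module.finrank_pi, Fintype.card_coe] at h1
    omega
  have hφz : φ (fun x : {x // x ∈ Z} => z ↑x) = 0 := by
    have hextz : ext (fun x : {x // x ∈ Z} => z ↑x) = z := by
      funext j
      rw [hext_apply]
      by_cases h : j ∈ Z
      · rw [dif_pos h]
      · rw [dif_neg h]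
        by_contra hne
        exact h ((hmemZ j).mpr fun h0 => hne h0.symm)
    rw [← hφB, hextz]
    exact hzker
  -- coordinates of v i in the basis of columns of L
  have hcf : ∀ i, ∃ cfi : {k // k ∈ R i} → q,
      (∑ k : {k // k ∈ R i}, cfi k • (fun j => L j (k : Fin (N - 1)))) = v i := by
    intro i
    have h1 := hspan i
    rw [Set.image_eq_range] at h1
    exact (Submodule.mem_span_range_iff_exists_fun q).mp h1
  choose cf hcf using hcf
  set w : Fin N → Fin (N - 1) → q :=
    fun i k => if h : k ∈ R i then cf i ⟨k, h⟩ else 0 with hw_def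
  have hw2 : ∀ i k, w i k ≠ 0 → k ∈ R i := by
    intro i k h
    by_contra h'
    exact h (dif_neg h')
  have hw1 : ∀ i, (∑ k : Fin (N - 1), w i k • fun j => L j k) = v i := by
    intro i
    have h1 : (∑ k : Fin (N - 1), w i k • fun j => L j k)
        = ∑ k ∈ R i, w i k • fun j => L j k := by
      symm
      apply Finset.sum_subset (Finset.subset_univ (R i))
      intro k _ hk
      rw [show w i k = 0 from dif_neg hk, zero_smul]
    rw [h1, ← Finset.sum_coe_sort (R i) (fun k => w i k • fun j => L j k), ← hcf i]
    apply Finset.sum_congr rfl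
    intro k _
    congr 1
    exact dif_pos k.2
  have hcancel : ∀ k0, (∑ x : {x // x ∈ Z}, z ↑x * w ↑x k0) = 0 := by
    have h0 : (∑ k0 : Fin (N - 1),
        (∑ x : {x // x ∈ Z}, z ↑x * w ↑x k0) • fun j => L j k0) = 0 := by
      calc (∑ k0 : Fin (N - 1), (∑ x : {x // x ∈ Z}, z ↑x * w ↑x k0) • fun j => L j k0)
          = ∑ k0 : Fin (N - 1), ∑ x : {x // x ∈ Z}, (z ↑x * w ↑x k0) • fun j => L j k0 := by
            apply Finset.sum_congr rfl; intro k0 _; rw [Finset.sum_smul]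
        _ = ∑ x : {x // x ∈ Z}, ∑ k0 : Fin (N - 1), (z ↑x * w ↑x k0) • fun j => L j k0 :=
            Finset.sum_comm
        _ = ∑ x : {x // x ∈ Z}, z ↑x • ∑ k0 : Fin (N - 1), w ↑x k0 • fun j => L j k0 := by
            apply Finset.sum_congr rfl; intro x _
            rw [Finset.smul_sum]
            apply Finset.sum_congr rfl; intro k0 _; rw [mul_smul]
        _ = ∑ x : {x // x ∈ Z}, z ↑x • v ↑x := by
            apply Finset.sum_congr rfl; intro x _; rw [hw1]
        _ = 0 := hφz
    exact fun k0 => Fintype.linearIndependent_iff.mp hLi _ h0 k0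
  set sfilt : Fin N → Finset (Fin (N - 1)) :=
    fun i => (R i).filter (fun k => w i k ≠ 0) with hsfilt
  set K' : Finset (Fin (N - 1)) := Z.biUnion sfilt with hK'
  have hvK' : ∀ i ∈ Z, v i ∈ Submodule.span q ((fun k (j : Fin N) => L j k) '' ↑K') := by
    intro i hi
    rw [← hw1 i]
    have h1 : (∑ k : Fin (N - 1), w i k • fun j => L j k)
        = ∑ k ∈ sfilt i, w i k • fun j => L j k := by
      symm
      apply Finset.sum_subset (Finset.subset_univ _)
      intro k _ hk
      by_cases h2 : w i k = 0
      · rw [h2, zero_smul]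
      · exact absurd (Finset.mem_filter.mpr ⟨hw2 i k h2, h2⟩) hk
    rw [h1]
    apply Submodule.sum_mem
    intro k hk
    apply Submodule.smul_mem
    apply Submodule.subset_span
    exact ⟨k, Finset.mem_coe.mpr (Finset.mem_biUnion.mpr ⟨i, hi, hk⟩), rfl⟩
  have hrangele : LinearMap.range φ ≤
      Submodule.span q ((fun k (j : Fin N) => L j k) '' ↑K') := by
    rintro x ⟨a, rfl⟩
    show (∑ x : {x // x ∈ Z}, a x • v ↑x) ∈ _
    apply Submodule.sum_mem
    intro x _
    exact Submodule.smul_mem _ _ (hvK' _ x.2)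
  have hspanK' : finrank q (Submodule.span q ((fun k (j : Fin N) => L j k) '' ↑K')) ≤ K'.card := by
    have h1 : ((fun k (j : Fin N) => L j k) '' ↑K')
        = ↑(K'.image (fun k (j : Fin N) => L j k)) := by
      rw [Finset.coe_image]
    rw [h1]
    exact le_trans (finrank_span_finset_le_card _) Finset.card_image_le
  have hK'card : d - 1 ≤ K'.card :=
    le_trans hrangeφ (le_trans (Submodule.finrank_mono hrangele) hspanK')
  have hK2 : ∀ k0 ∈ K', 2 ≤ (Z.filter (fun i => w i k0 ≠ 0)).card := by
    intro k0 hk0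
    set Tk := Z.filter (fun i => w i k0 ≠ 0) with hTk
    obtain ⟨i0, hi0Z, hi0⟩ : ∃ i ∈ Z, k0 ∈ sfilt i := Finset.mem_biUnion.mp hk0
    have hi0' : w i0 k0 ≠ 0 := (Finset.mem_filter.mp hi0).2
    have hne : Tk.Nonempty := ⟨i0, Finset.mem_filter.mpr ⟨hi0Z, hi0'⟩⟩
    by_contra h'
    push_neg at h'
    have hcard1 : Tk.card = 1 := by
      have := Finset.card_pos.mpr hne
      omega
    obtain ⟨i1, hi1⟩ := Finset.card_eq_one.mp hcard1
    have hsum := hcancel k0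
    rw [Finset.sum_coe_sort Z (fun i => z i * w i k0)] at hsum
    rw [← Finset.sum_subset (Finset.filter_subset (fun i => w i k0 ≠ 0) Z) (by
      intro i hiZ hiT
      have hwz : w i k0 = 0 := by
        by_contra hh
        exact hiT (Finset.mem_filter.mpr ⟨hiZ, hh⟩)
      show z i * w i k0 = 0
      rw [hwz, mul_zero])] at hsum
    rw [← hTk, hi1, Finset.sum_singleton] at hsum
    have hi1T : i1 ∈ Tk := by rw [hi1]; exact Finset.mem_singleton_self i1
    have hi1f := Finset.mem_filter.mp hi1T
    rcases mul_eq_zero.mp hsum with h | h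
    · exact ((hmemZ i1).mp hi1f.1) h
    · exact hi1f.2 h
  have hsumZ : 2 * (d - 1) ≤ ∑ i ∈ Z, (R i).card := by
    have h2 : ∑ i ∈ Z, (sfilt i).card ≤ ∑ i ∈ Z, (R i).card :=
      Finset.sum_le_sum (fun i _ => Finset.card_le_card (Finset.filter_subset _ _))
    have h3 : ∀ i ∈ Z, sfilt i = K'.filter (fun k => w i k ≠ 0) := by
      intro i hi
      ext k
      constructor
      · intro hk
        have hk' := Finset.mem_filter.mp hk
        exact Finset.mem_filter.mpr ⟨Finset.mem_biUnion.mpr ⟨i, hi, hk⟩, hk'.2⟩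
      · intro hk
        have hk' := Finset.mem_filter.mp hk
        exact Finset.mem_filter.mpr ⟨hw2 i k hk'.2, hk'.2⟩
    have h4 : ∑ i ∈ Z, (sfilt i).card = ∑ k0 ∈ K', (Z.filter (fun i => w i k0 ≠ 0)).card := by
      calc ∑ i ∈ Z, (sfilt i).card
          = ∑ i ∈ Z, ∑ k0 ∈ K', (if w i k0 ≠ 0 then 1 else 0) := by
            apply Finset.sum_congr rfl; intro i hi
            rw [h3 i hi, Finset.card_filter]
        _ = ∑ k0 ∈ K', ∑ i ∈ Z, (if w i k0 ≠ 0 then 1 else 0) := Finset.sum_comm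
        _ = ∑ k0 ∈ K', (Z.filter (fun i => w i k0 ≠ 0)).card := by
            apply Finset.sum_congr rfl; intro k0 _; rw [Finset.card_filter]
    have h5 : 2 * K'.card ≤ ∑ k0 ∈ K', (Z.filter (fun i => w i k0 ≠ 0)).card := by
      calc 2 * K'.card = ∑ _k0 ∈ K', 2 := by rw [Finset.sum_const, smul_eq_mul, mul_comm]
        _ ≤ _ := Finset.sum_le_sum hK2
    omega
  have hR1 : ∀ i, 1 ≤ (R i).card := by
    intro i
    rw [Nat.one_le_iff_ne_zero, Ne, Finset.card_eq_zero]
    intro hRi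
    have h1 := hspan i
    rw [hRi] at h1
    simp only [Finset.coe_empty, Set.image_empty, Submodule.span_empty,
      Submodule.mem_bot] at h1
    have h0 : v i i = 0 := congrFun h1 i
    rw [hvii i] at h0
    exact one_ne_zero h0
  constructor
  · by_contra h'
    push_neg at h'
    have h6 : ∑ i ∈ Z, (R i).card ≤ ∑ i ∈ Z, 1 :=
      Finset.sum_le_sum (fun i _ => by have := h' i; omega)
    rw [Finset.sum_const, smul_eq_mul, mul_one] at h6
    omega
  · have hsplit : ∑ i ∈ Z, (R i).card + ∑ i ∈ Zᶜ, (R i).card = ∑ i, (R i).card :=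
      Finset.sum_add_sum_compl Z _
    have hcompl : Zᶜ.card ≤ ∑ i ∈ Zᶜ, (R i).card := by
      calc Zᶜ.card = ∑ _i ∈ Zᶜ, 1 := by rw [Finset.sum_const, smul_eq_mul, mul_one]
        _ ≤ _ := Finset.sum_le_sum (fun i _ => hR1 i)
    have hcardc : Zᶜ.card = N - d := by rw [Finset.card_compl, Fintype.card_fin]
    omega

lemma part_b {N Nc : ℕ} (q : Type) [Field q]
    (K : Fin N → Finset (Fin N))
    (hNc : 3 ≤ Nc)
    (hcyc : HasCycleIn K Finset.univ Nc) :
    ∃ (L : Matrix (Fin N) (Fin (N - 1)) q) (R : Fin N → Finset (Fin (N - 1))),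
      ValidScalarCode q K L R ∧ (∀ i, (R i).card ≤ 2) ∧ (∃ i, (R i).card = 2) ∧
        ∑ i, (R i).card = N + Nc - 2 := by
  classical
  obtain ⟨c, -, hcinj, hedge⟩ := hcyc
  haveI : NeZero Nc := ⟨by omega⟩
  haveI : Fact (1 < Nc) := ⟨by omega⟩
  have hNcN : Nc ≤ N := by
    have := Fintype.card_le_of_injective c hcinj
    rwa [ZMod.card, Fintype.card_fin] at this
  set C : Finset (Fin N) := Finset.image c Finset.univ with hC
  have hCcard : C.card = Nc := by
    rw [hC, Finset.card_image_of_injective _ hcinj, Finset.card_univ, ZMod.card]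
  have hCc_card : Fintype.card {x // x ∈ Cᶜ} = N - Nc := by
    rw [Fintype.card_coe, Finset.card_compl, Fintype.card_fin, hCcard]
  have hcardι : Fintype.card (Fin (Nc - 1) ⊕ {x // x ∈ Cᶜ}) = Fintype.card (Fin (N - 1)) := by
    rw [Fintype.card_sum, Fintype.card_fin, Fintype.card_fin, hCc_card]; omega
  set e : (Fin (Nc - 1) ⊕ {x // x ∈ Cᶜ}) ≃ Fin (N - 1) := Fintype.equivOfCardEq hcardι with he
  set col : (Fin (Nc - 1) ⊕ {x // x ∈ Cᶜ}) → (Fin N → q) := fun x =>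
    match x with
    | Sum.inl t => Pi.single (c 0) 1 - Pi.single (c (((t : ℕ) + 1 : ℕ) : ZMod Nc)) 1
    | Sum.inr x => Pi.single (x : Fin N) 1
    with hcol
  set L : Matrix (Fin N) (Fin (N - 1)) q := fun j k => col (e.symm k) j with hL
  have hLcol : ∀ x, (fun j => L j (e x)) = col x := by
    intro x
    funext j
    show col (e.symm (e x)) j = col x j
    rw [Equiv.symm_apply_apply]
  have hcolmem : ∀ (s : Finset (Fin (N - 1))) (x), e x ∈ s →
      col x ∈ Submodule.span q ((fun k (j : Fin N) => L j k) '' ↑s) := by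
    intro s x hx
    apply Submodule.subset_span
    exact ⟨e x, hx, hLcol x⟩
  set sInv : Fin N → ZMod Nc := Function.invFun c with hsInv_def
  have hsInv : ∀ s, sInv (c s) = s := Function.leftInverse_invFun hcinj
  set R : Fin N → Finset (Fin (N - 1)) := fun i =>
    if h : i ∈ C then
      (if h0 : (sInv i).val = 0 then {e (Sum.inl ⟨0, by omega⟩)}
       else if hlast : (sInv i).val = Nc - 1 then {e (Sum.inl ⟨Nc - 2, by omega⟩)}
       else {e (Sum.inl ⟨(sInv i).val - 1, by have := ZMod.val_lt (sInv i); omega⟩),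
             e (Sum.inl ⟨(sInv i).val, by have := ZMod.val_lt (sInv i); omega⟩)})
    else {e (Sum.inr ⟨i, by rwa [Finset.mem_compl]⟩)} with hR
  -- validity
  have hvalid : ValidScalarCode q K L R := by
    intro i
    by_cases hiC : i ∈ C
    · obtain ⟨s, -, rfl⟩ := Finset.mem_image.mp hiC
      have hRs := hR
      by_cases h0 : (sInv (c s)).val = 0
      · -- first vertex of the cycle
        have hs0 : s = 0 := by
          rw [hsInv] at h0
          rwa [ZMod.val_eq_zero] at h0
        refine ⟨Pi.single (c 1) (-1), ?_, ?_⟩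
        · intro j hj
          have hj1 : j = c 1 := by
            by_contra hne
            rw [Pi.single_eq_of_ne hne] at hj
            exact hj rfl
          rw [hj1, hs0]
          simpa using hedge 0
        · have hRval : R (c s) = {e (Sum.inl ⟨0, by omega⟩)} := by
            simp only [hR]
            rw [dif_pos hiC, dif_pos h0]
          rw [hRval]
          have hcoleq : col (Sum.inl ⟨0, by omega⟩)
              = Pi.single (c 1) (-1 : q) + Pi.single (c s) 1 := by
            show Pi.single (c 0) 1 - Pi.single (c (((0 : ℕ) + 1 : ℕ) : ZMod Nc)) 1 = _
            rw [hs0]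
            rw [show ((((0 : ℕ) + 1 : ℕ)) : ZMod Nc) = (1 : ZMod Nc) by push_cast; ring]
            funext j
            simp only [Pi.add_apply, Pi.sub_apply, Pi.single_apply]
            split_ifs <;> ring
          rw [← hcoleq]
          exact hcolmem _ _ (Finset.mem_singleton_self _)
      · by_cases hlast : (sInv (c s)).val = Nc - 1
        · -- last vertex of the cycle
          have hsval : s.val = Nc - 1 := by rwa [hsInv] at hlast
          have hs1 : s + 1 = 0 := by
            have : s = ((Nc - 1 : ℕ) : ZMod Nc) := by
              have := ZMod.natCast_rightInverse s
              rw [← this, hsval]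
            rw [this]
            rw [show ((Nc - 1 : ℕ) : ZMod Nc) + 1 = (((Nc - 1) + 1 : ℕ) : ZMod Nc) by push_cast; ring]
            rw [show (Nc - 1) + 1 = Nc by omega, ZMod.natCast_self]
          refine ⟨Pi.single (c 0) (-1), ?_, ?_⟩
          · intro j hj
            have hj1 : j = c 0 := by
              by_contra hne
              rw [Pi.single_eq_of_ne hne] at hj
              exact hj rfl
            rw [hj1]
            have := hedge s
            rwa [hs1] at this
          · have hRval : R (c s) = {e (Sum.inl ⟨Nc - 2, by omega⟩)} := by
              simp only [hR]
              rw [dif_pos hiC, dif_neg h0, dif_pos hlast]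
            rw [hRval]
            have hcoleq : Pi.single (c 0) (-1 : q) + Pi.single (c s) 1
                = -(col (Sum.inl ⟨Nc - 2, by omega⟩)) := by
              show _ = -(Pi.single (c 0) 1 - Pi.single (c (((Nc - 2 : ℕ) + 1 : ℕ) : ZMod Nc)) 1)
              have hcs : (((Nc - 2 : ℕ) + 1 : ℕ) : ZMod Nc) = s := by
                rw [show (Nc - 2) + 1 = Nc - 1 by omega]
                have := ZMod.natCast_rightInverse s
                rw [← this, hsval]
              rw [hcs]
              funext j
              simp only [Pi.add_apply, Pi.sub_apply, Pi.neg_apply, Pi.single_apply]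
              split_ifs <;> ring
            rw [hcoleq]
            exact Submodule.neg_mem _ (hcolmem _ _ (Finset.mem_singleton_self _))
        · -- middle vertex
          have hsval0 : (sInv (c s)).val = s.val := by rw [hsInv]
          have hval_lt := ZMod.val_lt s
          have h0' : s.val ≠ 0 := by rwa [hsInv] at h0
          have hlast' : s.val ≠ Nc - 1 := by rwa [hsInv] at hlast
          refine ⟨Pi.single (c (s + 1)) (-1), ?_, ?_⟩
          · intro j hj
            have hj1 : j = c (s + 1) := by
              by_contra hne
              rw [Pi.single_eq_of_ne hne] at hj
              exact hj rfl
            rw [hj1]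
            exact hedge s
          · have hRval : R (c s) =
                {e (Sum.inl ⟨(sInv (c s)).val - 1, by have := ZMod.val_lt (sInv (c s)); omega⟩),
                 e (Sum.inl ⟨(sInv (c s)).val, by have := ZMod.val_lt (sInv (c s)); omega⟩)} := by
              simp only [hR]
              rw [dif_pos hiC, dif_neg h0, dif_neg hlast]
            rw [hRval]
            have hc1 : ((((sInv (c s)).val - 1 : ℕ) + 1 : ℕ) : ZMod Nc) = s := by
              rw [hsInv, show (s.val - 1) + 1 = s.val by omega]
              exact ZMod.natCast_rightInverse s
            have hc2 : ((((sInv (c s)).val : ℕ) + 1 : ℕ) : ZMod Nc) = s + 1 := by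
              rw [hsInv]
              push_cast
              rw [ZMod.natCast_rightInverse s]
            have hcoleq : Pi.single (c (s + 1)) (-1 : q) + Pi.single (c s) 1
                = col (Sum.inl ⟨(sInv (c s)).val, by have := ZMod.val_lt (sInv (c s)); omega⟩)
                  - col (Sum.inl ⟨(sInv (c s)).val - 1, by have := ZMod.val_lt (sInv (c s)); omega⟩) := by
              show _ = (Pi.single (c 0) 1 - Pi.single (c ((((sInv (c s)).val : ℕ) + 1 : ℕ) : ZMod Nc)) 1)
                - (Pi.single (c 0) 1 - Pi.single (c ((((sInv (c s)).val - 1 : ℕ) + 1 : ℕ) : ZMod Nc)) 1)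
              rw [hc1, hc2]
              funext j
              simp only [Pi.add_apply, Pi.sub_apply, Pi.single_apply]
              split_ifs <;> ring
            rw [hcoleq]
            exact Submodule.sub_mem _
              (hcolmem _ _ (Finset.mem_insert_of_mem (Finset.mem_singleton_self _)))
              (hcolmem _ _ (Finset.mem_insert_self _ _))
    · refine ⟨0, fun j hj => absurd rfl hj, ?_⟩
      have hRval : R i = {e (Sum.inr ⟨i, by rwa [Finset.mem_compl]⟩)} := by
        simp only [hR]
        rw [dif_neg hiC]
      rw [hRval, zero_add]
      have : col (Sum.inr ⟨i, by rwa [Finset.mem_compl]⟩) = Pi.single i 1 := rfl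
      rw [← this]
      exact hcolmem _ _ (Finset.mem_singleton_self _)
  -- cardinalities
  have hpairne : ∀ (a b : ℕ) (ha : a < Nc - 1) (hb : b < Nc - 1), a ≠ b →
      e (Sum.inl ⟨a, ha⟩) ≠ e (Sum.inl ⟨b, hb⟩) := by
    intro a b ha hb hne h
    have := Sum.inl.inj (e.injective h)
    exact hne (congrArg Fin.val this)
  have hRcard : ∀ i, (R i).card =
      if i ∈ C then (if (sInv i).val = 0 ∨ (sInv i).val = Nc - 1 then 1 else 2) else 1 := by
    intro i
    by_cases hiC : i ∈ C
    · rw [if_pos hiC]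
      by_cases h0 : (sInv i).val = 0
      · have hRval : R i = {e (Sum.inl ⟨0, by omega⟩)} := by
          simp only [hR]; rw [dif_pos hiC, dif_pos h0]
        rw [hRval, if_pos (Or.inl h0), Finset.card_singleton]
      · by_cases hlast : (sInv i).val = Nc - 1
        · have hRval : R i = {e (Sum.inl ⟨Nc - 2, by omega⟩)} := by
            simp only [hR]; rw [dif_pos hiC, dif_neg h0, dif_pos hlast]
          rw [hRval, if_pos (Or.inr hlast), Finset.card_singleton]
        · have hRval : R i =
              {e (Sum.inl ⟨(sInv i).val - 1, by have := ZMod.val_lt (sInv i); omega⟩),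
               e (Sum.inl ⟨(sInv i).val, by have := ZMod.val_lt (sInv i); omega⟩)} := by
            simp only [hR]; rw [dif_pos hiC, dif_neg h0, dif_neg hlast]
          rw [hRval, if_neg (by push_neg; exact ⟨h0, hlast⟩)]
          exact Finset.card_pair (hpairne _ _ _ _ (by have := ZMod.val_lt (sInv i); omega))
    · rw [if_neg hiC]
      have hRval : R i = {e (Sum.inr ⟨i, by rwa [Finset.mem_compl]⟩)} := by
        simp only [hR]; rw [dif_neg hiC]
      rw [hRval, Finset.card_singleton]
  refine ⟨L, R, hvalid, ?_, ?_, ?_⟩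
  · intro i
    rw [hRcard i]
    split_ifs <;> omega
  · refine ⟨c 1, ?_⟩
    have hmem : c 1 ∈ C := Finset.mem_image.mpr ⟨1, Finset.mem_univ _, rfl⟩
    rw [hRcard, if_pos hmem, hsInv, ZMod.val_one]
    rw [if_neg (by omega)]
  · have hsplit : ∑ i ∈ C, (R i).card + ∑ i ∈ Cᶜ, (R i).card = ∑ i, (R i).card :=
      Finset.sum_add_sum_compl C _
    have hcompl : ∑ i ∈ Cᶜ, (R i).card = N - Nc := by
      have h1 : ∀ i ∈ Cᶜ, (R i).card = 1 := by
        intro i hi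
        rw [hRcard, if_neg (Finset.mem_compl.mp hi)]
      rw [Finset.sum_congr rfl h1, Finset.sum_const, smul_eq_mul, mul_one,
        Finset.card_compl, Fintype.card_fin, hCcard]
    have hCsum : ∑ i ∈ C, (R i).card = 2 * Nc - 2 := by
      rw [hC, Finset.sum_image (fun x _ y _ h => hcinj h)]
      have h1 : ∀ s : ZMod Nc, (R (c s)).card =
          if s.val = 0 ∨ s.val = Nc - 1 then 1 else 2 := by
        intro s
        rw [hRcard, if_pos (Finset.mem_image.mpr ⟨s, Finset.mem_univ _, rfl⟩), hsInv]
      rw [Finset.sum_congr rfl (fun s _ => h1 s)]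
      have hfsplit := Finset.sum_filter_add_sum_filter_not Finset.univ
        (fun s : ZMod Nc => s.val = 0 ∨ s.val = Nc - 1)
        (fun s => if s.val = 0 ∨ s.val = Nc - 1 then 1 else 2)
      have hP : ∑ s ∈ Finset.univ.filter (fun s : ZMod Nc => s.val = 0 ∨ s.val = Nc - 1),
          (if s.val = 0 ∨ s.val = Nc - 1 then 1 else 2) =
          (Finset.univ.filter (fun s : ZMod Nc => s.val = 0 ∨ s.val = Nc - 1)).card := by
        rw [Finset.sum_congr rfl (fun s hs => if_pos (Finset.mem_filter.mp hs).2),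
          Finset.sum_const, smul_eq_mul, mul_one]
      have hnP : ∑ s ∈ Finset.univ.filter (fun s : ZMod Nc => ¬(s.val = 0 ∨ s.val = Nc - 1)),
          (if s.val = 0 ∨ s.val = Nc - 1 then 1 else 2) =
          2 * (Finset.univ.filter (fun s : ZMod Nc => ¬(s.val = 0 ∨ s.val = Nc - 1))).card := by
        rw [Finset.sum_congr rfl (fun s hs => if_neg (Finset.mem_filter.mp hs).2),
          Finset.sum_const, smul_eq_mul, mul_comm]
      have hPcard : (Finset.univ.filter (fun s : ZMod Nc => s.val = 0 ∨ s.val = Nc - 1)).card = 2 := by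
        have heq : Finset.univ.filter (fun s : ZMod Nc => s.val = 0 ∨ s.val = Nc - 1)
            = {(0 : ZMod Nc), ((Nc - 1 : ℕ) : ZMod Nc)} := by
          ext s
          simp only [Finset.mem_filter, Finset.mem_univ, true_and, Finset.mem_insert,
            Finset.mem_singleton]
          constructor
          · rintro (h | h)
            · left; rwa [ZMod.val_eq_zero] at h
            · right
              have := ZMod.natCast_rightInverse s
              rw [← this, h]
          · rintro (rfl | rfl)
            · left; exact ZMod.val_zero
            · right; exact ZMod.val_cast_of_lt (by omega)
        rw [heq]
        rw [Finset.card_insert_of_notMem, Finset.card_singleton]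
        rw [Finset.mem_singleton]
        intro h
        have h2 := congrArg ZMod.val h
        rw [ZMod.val_zero, ZMod.val_cast_of_lt (by omega : Nc - 1 < Nc)] at h2
        omega
      have htot := Finset.card_filter_add_card_filter_not
        (s := (Finset.univ : Finset (ZMod Nc)))
        (p := fun s : ZMod Nc => s.val = 0 ∨ s.val = Nc - 1)
      rw [Finset.card_univ, ZMod.card] at htot
      rw [← hfsplit, hP, hnP, hPcard]
      omega
    omega

/-- If `minrk_q(G) = N−1` and the shortest directed cycle of `G` has length
`N_c ≥ 3`, then (a) every valid scalar linear index code for `G` of codelength `N−1`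
satisfies `max_i |R_i| ≥ 2` and `∑_i |R_i| ≥ N + N_c − 2`; and (b) there is such a code
with `max_i |R_i| = 2` and `∑_i |R_i| = N + N_c − 2`. -/
theorem minrank_N_minus_one_optimal_locality
    {N Nc : ℕ} (q : Type) [Field q] [Fintype q]
    (K : Fin N → Finset (Fin N)) (hK : ∀ i, i ∉ K i)
    (hminrk : minrk q K = N - 1)
    (hNc : 3 ≤ Nc)
    (hcyc : HasCycleIn K Finset.univ Nc)
    (hshortest : ∀ n, 0 < n → n < Nc → ¬ HasCycleIn K Finset.univ n) :
    (∀ (L : Matrix (Fin N) (Fin (N - 1)) q) (R : Fin N → Finset (Fin (N - 1))),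
        ValidScalarCode q K L R →
          (∃ i, 2 ≤ (R i).card) ∧ N + Nc - 2 ≤ ∑ i, (R i).card) ∧
    (∃ (L : Matrix (Fin N) (Fin (N - 1)) q) (R : Fin N → Finset (Fin (N - 1))),
        ValidScalarCode q K L R ∧ (∀ i, (R i).card ≤ 2) ∧ (∃ i, (R i).card = 2) ∧
        ∑ i, (R i).card = N + Nc - 2) := by
  have hN : 3 ≤ N := by
    obtain ⟨c, -, hcinj, -⟩ := hcyc
    haveI : NeZero Nc := ⟨by omega⟩
    have := Fintype.card_le_of_injective c hcinj
    rw [ZMod.card, Fintype.card_fin] at this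
    omega
  exact ⟨fun L R h => part_a q K hK hminrk hNc hshortest hN L R h, part_b q K hNc hcyc⟩
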